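/- Let n ≥ 2 and let G be the complete graph on n vertices with a loop at every vertex. Then there exists an integer p ≤ 10·log n (natural logarithm) and linear orderings <_1,…,<_p of the vertex set such that: (1) every pair of edges with no common endpoint are separated in some <_i; and (2) for every vertex v and distinct vertices u,w different from v, there exists i with u <_i v <_i w or w <_i v <_i u. -/

import Mathlib

/-- Two edges `{v,w}` and `{x,y}` (possibly loops) with disjoint endpoint sets are
separated in the ordering given by `f` if all endpoints of one precede all endpoints
of the other. -/
def Separates {V : Type*} (f : V → ℕ) (v w x y : V) : Prop :=
  (f v < f x ∧ f v < f y ∧ f w < f x ∧ f w < f y) ∨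
  (f x < f v ∧ f x < f w ∧ f y < f v ∧ f y < f w)

/- ### Auxiliary material for the proof -/

section Aux

open Finset

/-- the 3-cycle a → b → d → a -/
def cgwlCyc {α : Type*} [DecidableEq α] (a b d : α) : Equiv.Perm α :=
  (Equiv.swap a b) * (Equiv.swap b d)

variable {α : Type*} [DecidableEq α] {a b d : α}

lemma cgwlCyc_a (hab : a ≠ b) (had : a ≠ d) : cgwlCyc a b d a = b := by
  simp [cgwlCyc, Equiv.Perm.mul_apply, Equiv.swap_apply_of_ne_of_ne hab had]

lemma cgwlCyc_b (had : a ≠ d) (hbd : b ≠ d) : cgwlCyc a b d b = d := by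
  simp [cgwlCyc, Equiv.Perm.mul_apply, Equiv.swap_apply_of_ne_of_ne (Ne.symm had) hbd.symm]

lemma cgwlCyc_d : cgwlCyc a b d d = a := by
  simp [cgwlCyc, Equiv.Perm.mul_apply]

lemma cgwlCyc_other {x : α} (hxa : x ≠ a) (hxb : x ≠ b) (hxd : x ≠ d) :
    cgwlCyc a b d x = x := by
  simp [cgwlCyc, Equiv.Perm.mul_apply, Equiv.swap_apply_of_ne_of_ne hxb hxd,
    Equiv.swap_apply_of_ne_of_ne hxa hxb]

/- pure arithmetic case analyses -/

lemma cgwlNatL4 {A B C D : ℕ} (dAB : A ≠ B) (dAC : A ≠ C) (dAD : A ≠ D)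
    (dBC : B ≠ C) (dBD : B ≠ D) (dCD : C ≠ D) :
    ((A<C∧A<D∧B<C∧B<D)∨(C<A∧C<B∧D<A∧D<B)) ∨
    ((C<D∧C<A∧B<D∧B<A)∨(D<C∧D<B∧A<C∧A<B)) ∨
    ((D<A∧D<C∧B<A∧B<C)∨(A<D∧A<B∧C<D∧C<B)) := by
  by_cases hA : A < B <;> by_cases hC : C < B <;> by_cases hD : D < B
  · by_cases h1 : A < C
    · by_cases h2 : C < D
      · exact Or.inr (Or.inr (Or.inr ⟨by omega, by omega, by omega, by omega⟩))
      · exact Or.inr (Or.inl (Or.inr ⟨by omega, by omega, by omega, by omega⟩))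
    · by_cases h2 : A < D
      · exact Or.inr (Or.inr (Or.inr ⟨by omega, by omega, by omega, by omega⟩))
      · exact Or.inl (Or.inr ⟨by omega, by omega, by omega, by omega⟩)
  · exact Or.inr (Or.inr (Or.inr ⟨by omega, by omega, by omega, by omega⟩))
  · exact Or.inr (Or.inl (Or.inr ⟨by omega, by omega, by omega, by omega⟩))
  · exact Or.inl (Or.inl ⟨by omega, by omega, by omega, by omega⟩)
  · exact Or.inl (Or.inr ⟨by omega, by omega, by omega, by omega⟩)
  · exact Or.inr (Or.inl (Or.inl ⟨by omega, by omega, by omega, by omega⟩))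
  · exact Or.inr (Or.inr (Or.inl ⟨by omega, by omega, by omega, by omega⟩))
  · by_cases h1 : A < C
    · by_cases h2 : A < D
      · exact Or.inl (Or.inl ⟨by omega, by omega, by omega, by omega⟩)
      · exact Or.inr (Or.inr (Or.inl ⟨by omega, by omega, by omega, by omega⟩))
    · by_cases h2 : C < D
      · exact Or.inr (Or.inl (Or.inl ⟨by omega, by omega, by omega, by omega⟩))
      · exact Or.inr (Or.inr (Or.inl ⟨by omega, by omega, by omega, by omega⟩))

lemma cgwlNatL3loop {A C D : ℕ} (dAC : A ≠ C) (dAD : A ≠ D) (dCD : C ≠ D) :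
    ((A<C∧A<D∧A<C∧A<D)∨(C<A∧C<A∧D<A∧D<A)) ∨
    ((C<D∧C<A∧C<D∧C<A)∨(D<C∧D<C∧A<C∧A<C)) ∨
    ((D<A∧D<C∧D<A∧D<C)∨(A<D∧A<D∧C<D∧C<D)) := by
  by_cases h1 : A < C
  · by_cases h2 : A < D
    · exact Or.inl (Or.inl ⟨h1, h2, h1, h2⟩)
    · exact Or.inr (Or.inr (Or.inl ⟨by omega, by omega, by omega, by omega⟩))
  · by_cases h2 : C < D
    · exact Or.inr (Or.inl (Or.inl ⟨by omega, by omega, by omega, by omega⟩))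
    · exact Or.inr (Or.inr (Or.inl ⟨by omega, by omega, by omega, by omega⟩))

lemma cgwlNatL3x {A B C : ℕ} (dAB : A ≠ B) (dAC : A ≠ C) (dBC : B ≠ C) :
    ((A<C∧A<C∧B<C∧B<C)∨(C<A∧C<B∧C<A∧C<B)) ∨
    ((B<A∧B<A∧C<A∧C<A)∨(A<B∧A<C∧A<B∧A<C)) ∨
    ((C<B∧C<B∧A<B∧A<B)∨(B<C∧B<A∧B<C∧B<A)) := by
  by_cases h1 : A < C
  · by_cases h2 : B < C
    · exact Or.inl (Or.inl ⟨h1, h1, h2, h2⟩)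
    · exact Or.inr (Or.inr (Or.inl ⟨by omega, by omega, by omega, by omega⟩))
  · by_cases h2 : B < C
    · exact Or.inr (Or.inr (Or.inr ⟨by omega, by omega, by omega, by omega⟩))
    · exact Or.inl (Or.inr ⟨by omega, by omega, by omega, by omega⟩)

lemma cgwlNatMid {A B C : ℕ} (dAB : A ≠ B) (dAC : A ≠ C) (dBC : B ≠ C) :
    ((B<A∧A<C)∨(C<A∧A<B)) ∨ ((C<B∧B<A)∨(A<B∧B<C)) ∨ ((A<C∧C<B)∨(B<C∧C<A)) := by
  by_cases h1 : A < B
  · by_cases h2 : B < C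
    · exact Or.inr (Or.inl (Or.inr ⟨h1, h2⟩))
    · by_cases h3 : A < C
      · exact Or.inr (Or.inr (Or.inl ⟨by omega, by omega⟩))
      · exact Or.inl (Or.inr ⟨by omega, by omega⟩)
  · by_cases h3 : A < C
    · exact Or.inl (Or.inl ⟨by omega, by omega⟩)
    · by_cases h2 : B < C
      · exact Or.inr (Or.inr (Or.inr ⟨by omega, by omega⟩))
      · exact Or.inr (Or.inl (Or.inl ⟨by omega, by omega⟩))

/- orbit certificates for the two kinds of events -/

lemma cgwlGood3Sep {n : ℕ} (u w x y : Fin n) (hux : u ≠ x) (huy : u ≠ y)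
    (hwx : w ≠ x) (hwy : w ≠ y) :
    ∃ c : Equiv.Perm (Fin n), ∀ σ : Equiv.Perm (Fin n),
      Separates (fun v => ((σ v : Fin n) : ℕ)) u w x y ∨
      Separates (fun v => (((c.trans σ) v : Fin n) : ℕ)) u w x y ∨
      Separates (fun v => ((((c.trans c).trans σ) v : Fin n) : ℕ)) u w x y := by
  by_cases hxy : x = y
  · subst hxy
    by_cases huw : u = w
    · subst huw
      refine ⟨1, fun σ => Or.inl ?_⟩
      have h1 : ((σ u : Fin n) : ℕ) ≠ ((σ x : Fin n) : ℕ) :=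
        fun hh => hux (σ.injective (Fin.val_injective hh))
      rcases Nat.lt_or_ge ((σ u : Fin n) : ℕ) ((σ x : Fin n) : ℕ) with h | h
      · exact Or.inl ⟨h, h, h, h⟩
      · have h2 : ((σ x : Fin n) : ℕ) < ((σ u : Fin n) : ℕ) := by omega
        exact Or.inr ⟨h2, h2, h2, h2⟩
    · refine ⟨cgwlCyc x u w, fun σ => ?_⟩
      have hv : ∀ {a b : Fin n}, a ≠ b → ((σ a : Fin n) : ℕ) ≠ ((σ b : Fin n) : ℕ) :=
        fun h hh => h (σ.injective (Fin.val_injective hh))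
      have e1 : cgwlCyc x u w x = u := cgwlCyc_a (Ne.symm hux) (Ne.symm hwx)
      have e2 : cgwlCyc x u w u = w := cgwlCyc_b (Ne.symm hwx) huw
      have e3 : cgwlCyc x u w w = x := cgwlCyc_d
      simp only [Separates, Equiv.trans_apply, e1, e2, e3]
      exact cgwlNatL3x (hv huw) (hv hux) (hv hwx)
  · by_cases huw : u = w
    · subst huw
      refine ⟨cgwlCyc u x y, fun σ => ?_⟩
      have hv : ∀ {a b : Fin n}, a ≠ b → ((σ a : Fin n) : ℕ) ≠ ((σ b : Fin n) : ℕ) :=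
        fun h hh => h (σ.injective (Fin.val_injective hh))
      have e1 : cgwlCyc u x y u = x := cgwlCyc_a hux huy
      have e2 : cgwlCyc u x y x = y := cgwlCyc_b huy hxy
      have e3 : cgwlCyc u x y y = u := cgwlCyc_d
      simp only [Separates, Equiv.trans_apply, e1, e2, e3]
      exact cgwlNatL3loop (hv hux) (hv huy) (hv hxy)
    · refine ⟨cgwlCyc u x y, fun σ => ?_⟩
      have hv : ∀ {a b : Fin n}, a ≠ b → ((σ a : Fin n) : ℕ) ≠ ((σ b : Fin n) : ℕ) :=
        fun h hh => h (σ.injective (Fin.val_injective hh))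
      have e1 : cgwlCyc u x y u = x := cgwlCyc_a hux huy
      have e2 : cgwlCyc u x y x = y := cgwlCyc_b huy hxy
      have e3 : cgwlCyc u x y y = u := cgwlCyc_d
      have e4 : cgwlCyc u x y w = w := cgwlCyc_other (Ne.symm huw) hwx hwy
      simp only [Separates, Equiv.trans_apply, e1, e2, e3, e4]
      exact cgwlNatL4 (hv huw) (hv hux) (hv huy) (hv hwx) (hv hwy) (hv hxy)

lemma cgwlGood3Mid {n : ℕ} (v u w : Fin n) (huv : u ≠ v) (hwv : w ≠ v) (huw : u ≠ w) :
    ∃ c : Equiv.Perm (Fin n), ∀ σ : Equiv.Perm (Fin n),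
      ((((σ u : Fin n) : ℕ) < ((σ v : Fin n) : ℕ) ∧ ((σ v : Fin n) : ℕ) < ((σ w : Fin n) : ℕ)) ∨
       (((σ w : Fin n) : ℕ) < ((σ v : Fin n) : ℕ) ∧ ((σ v : Fin n) : ℕ) < ((σ u : Fin n) : ℕ))) ∨
      (((((c.trans σ) u : Fin n) : ℕ) < (((c.trans σ) v : Fin n) : ℕ) ∧
        (((c.trans σ) v : Fin n) : ℕ) < (((c.trans σ) w : Fin n) : ℕ)) ∨
       ((((c.trans σ) w : Fin n) : ℕ) < (((c.trans σ) v : Fin n) : ℕ) ∧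
        (((c.trans σ) v : Fin n) : ℕ) < (((c.trans σ) u : Fin n) : ℕ))) ∨
      ((((((c.trans c).trans σ) u : Fin n) : ℕ) < ((((c.trans c).trans σ) v : Fin n) : ℕ) ∧
        ((((c.trans c).trans σ) v : Fin n) : ℕ) < ((((c.trans c).trans σ) w : Fin n) : ℕ)) ∨
       (((((c.trans c).trans σ) w : Fin n) : ℕ) < ((((c.trans c).trans σ) v : Fin n) : ℕ) ∧
        ((((c.trans c).trans σ) v : Fin n) : ℕ) < ((((c.trans c).trans σ) u : Fin n) : ℕ))) := by
  refine ⟨cgwlCyc v u w, fun σ => ?_⟩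
  have hv : ∀ {a b : Fin n}, a ≠ b → ((σ a : Fin n) : ℕ) ≠ ((σ b : Fin n) : ℕ) :=
    fun h hh => h (σ.injective (Fin.val_injective hh))
  have e1 : cgwlCyc v u w v = u := cgwlCyc_a (Ne.symm huv) (Ne.symm hwv)
  have e2 : cgwlCyc v u w u = w := cgwlCyc_b (Ne.symm hwv) huw
  have e3 : cgwlCyc v u w w = v := cgwlCyc_d
  simp only [Equiv.trans_apply, e1, e2, e3]
  exact cgwlNatMid (hv huv.symm) (hv hwv.symm) (hv huw)

/- counting -/

lemma cgwlOrbitBound {α : Type*} [Fintype α] [DecidableEq α]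
    (Good : Equiv.Perm α → Prop) [DecidablePred Good] (c : Equiv.Perm α)
    (h : ∀ σ : Equiv.Perm α, Good σ ∨ Good (c.trans σ) ∨ Good ((c.trans c).trans σ)) :
    3 * (Finset.univ.filter fun σ => ¬ Good σ).card ≤ 2 * Fintype.card (Equiv.Perm α) := by
  set G : Finset (Equiv.Perm α) := Finset.univ.filter (fun σ => Good σ) with hG
  have hsub : (Finset.univ : Finset (Equiv.Perm α)) ⊆
      (G ∪ G.image (fun τ => c.symm.trans τ)) ∪ G.image (fun τ => (c.trans c).symm.trans τ) := by
    intro σ _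
    rcases h σ with h1 | h1 | h1
    · exact Finset.mem_union_left _ (Finset.mem_union_left _ (by simp [hG, h1]))
    · refine Finset.mem_union_left _ (Finset.mem_union_right _ ?_)
      refine Finset.mem_image.2 ⟨c.trans σ, by simp [hG, h1], ?_⟩
      ext x; simp
    · refine Finset.mem_union_right _ ?_
      refine Finset.mem_image.2 ⟨(c.trans c).trans σ, by simp [hG, h1], ?_⟩
      ext x; simp
  have hcard : Fintype.card (Equiv.Perm α) ≤ 3 * G.card := by
    have h1 : Fintype.card (Equiv.Perm α) ≤
        ((G ∪ G.image (fun τ => c.symm.trans τ)) ∪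
          G.image (fun τ => (c.trans c).symm.trans τ)).card := by
      rw [← Finset.card_univ]; exact Finset.card_le_card hsub
    calc Fintype.card (Equiv.Perm α)
        ≤ _ := h1
      _ ≤ (G ∪ G.image (fun τ => c.symm.trans τ)).card
            + (G.image (fun τ => (c.trans c).symm.trans τ)).card := Finset.card_union_le _ _
      _ ≤ (G.card + (G.image (fun τ => c.symm.trans τ)).card)
            + (G.image (fun τ => (c.trans c).symm.trans τ)).card :=
          add_le_add_left (Finset.card_union_le _ _) _
      _ ≤ (G.card + G.card) + G.card :=
          add_le_add (add_le_add (le_refl _) (Finset.card_image_le)) (Finset.card_image_le)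
      _ = 3 * G.card := by ring
  have hsplit := Finset.card_filter_add_card_filter_not
    (s := (Finset.univ : Finset (Equiv.Perm α))) (p := fun σ => Good σ)
  simp only [Finset.card_univ, ← hG] at hsplit
  omega

/-- Union bound over events, each with an orbit-goodness certificate. -/
lemma cgwlExistsGoodTuple {α : Type*} [Fintype α] [DecidableEq α]
    {ι κ : Type*} [Fintype ι] [Fintype κ] [DecidableEq ι] [DecidableEq κ]
    (E1 : Finset ι) (E2 : Finset κ)
    (G1 : ι → Equiv.Perm α → Prop) (G2 : κ → Equiv.Perm α → Prop)
    (p : ℕ)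
    (h1 : ∀ e ∈ E1, ∃ c : Equiv.Perm α, ∀ σ,
      G1 e σ ∨ G1 e (c.trans σ) ∨ G1 e ((c.trans c).trans σ))
    (h2 : ∀ e ∈ E2, ∃ c : Equiv.Perm α, ∀ σ,
      G2 e σ ∨ G2 e (c.trans σ) ∨ G2 e ((c.trans c).trans σ))
    (hcard : ((E1.card : ℝ) + E2.card) * (2/3) ^ p < 1) :
    ∃ F : Fin p → Equiv.Perm α,
      (∀ e ∈ E1, ∃ i, G1 e (F i)) ∧ (∀ e ∈ E2, ∃ i, G2 e (F i)) := by
  classical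
  set N := Fintype.card (Equiv.Perm α) with hN
  have hNpos : 0 < N := Fintype.card_pos
  set bad1 : ι → Finset (Equiv.Perm α) := fun e => Finset.univ.filter (fun σ => ¬ G1 e σ)
    with hbad1
  set bad2 : κ → Finset (Equiv.Perm α) := fun e => Finset.univ.filter (fun σ => ¬ G2 e σ)
    with hbad2
  have hb1 : ∀ e ∈ E1, 3 * (bad1 e).card ≤ 2 * N := by
    intro e he; obtain ⟨c, hc⟩ := h1 e he
    exact cgwlOrbitBound (G1 e) c hc
  have hb2 : ∀ e ∈ E2, 3 * (bad2 e).card ≤ 2 * N := by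
    intro e he; obtain ⟨c, hc⟩ := h2 e he
    exact cgwlOrbitBound (G2 e) c hc
  set BadF : Finset (Fin p → Equiv.Perm α) := Finset.univ.filter
      (fun F => (∃ e ∈ E1, ∀ i, ¬ G1 e (F i)) ∨ (∃ e ∈ E2, ∀ i, ¬ G2 e (F i))) with hBadF
  have hsub : BadF ⊆ E1.biUnion (fun e => Fintype.piFinset (fun _ : Fin p => bad1 e))
      ∪ E2.biUnion (fun e => Fintype.piFinset (fun _ : Fin p => bad2 e)) := by
    intro F hF
    rw [hBadF, Finset.mem_filter] at hF
    rcases hF.2 with ⟨e, he, hall⟩ | ⟨e, he, hall⟩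
    · refine Finset.mem_union_left _ (Finset.mem_biUnion.2 ⟨e, he, ?_⟩)
      rw [Fintype.mem_piFinset]; intro i; simp [hbad1, hall i]
    · refine Finset.mem_union_right _ (Finset.mem_biUnion.2 ⟨e, he, ?_⟩)
      rw [Fintype.mem_piFinset]; intro i; simp [hbad2, hall i]
  have hpi1 : ∀ e ∈ E1, ((Fintype.piFinset (fun _ : Fin p => bad1 e)).card : ℝ)
      ≤ (2/3)^p * (N:ℝ)^p := by
    intro e he
    rw [Fintype.card_piFinset]
    have hb := hb1 e he
    have hle : ((bad1 e).card : ℝ) ≤ 2/3 * N := by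
      have : (3 * (bad1 e).card : ℝ) ≤ 2 * N := by exact_mod_cast hb
      linarith
    calc ((∏ _i : Fin p, (bad1 e).card : ℕ) : ℝ) = (((bad1 e).card : ℝ))^p := by
          push_cast; simp [Finset.prod_const]
      _ ≤ (2/3 * N)^p := by
          apply pow_le_pow_left₀ (by positivity) hle
      _ = (2/3)^p * (N:ℝ)^p := by rw [mul_pow]
  have hpi2 : ∀ e ∈ E2, ((Fintype.piFinset (fun _ : Fin p => bad2 e)).card : ℝ)
      ≤ (2/3)^p * (N:ℝ)^p := by
    intro e he
    rw [Fintype.card_piFinset]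
    have hb := hb2 e he
    have hle : ((bad2 e).card : ℝ) ≤ 2/3 * N := by
      have : (3 * (bad2 e).card : ℝ) ≤ 2 * N := by exact_mod_cast hb
      linarith
    calc ((∏ _i : Fin p, (bad2 e).card : ℕ) : ℝ) = (((bad2 e).card : ℝ))^p := by
          push_cast; simp [Finset.prod_const]
      _ ≤ (2/3 * N)^p := by
          apply pow_le_pow_left₀ (by positivity) hle
      _ = (2/3)^p * (N:ℝ)^p := by rw [mul_pow]
  have hcardBad : (BadF.card : ℝ) < (N:ℝ)^p := by
    have step1 : BadF.card ≤
        (E1.biUnion (fun e => Fintype.piFinset (fun _ : Fin p => bad1 e))).card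
        + (E2.biUnion (fun e => Fintype.piFinset (fun _ : Fin p => bad2 e))).card :=
      le_trans (Finset.card_le_card hsub) (Finset.card_union_le _ _)
    have step2 : ((E1.biUnion (fun e => Fintype.piFinset (fun _ : Fin p => bad1 e))).card : ℝ)
        ≤ (E1.card : ℝ) * ((2/3)^p * (N:ℝ)^p) := by
      calc ((E1.biUnion _).card : ℝ)
          ≤ ((∑ e ∈ E1, (Fintype.piFinset (fun _ : Fin p => bad1 e)).card : ℕ) : ℝ) := by
            exact_mod_cast Finset.card_biUnion_le
        _ = ∑ e ∈ E1, ((Fintype.piFinset (fun _ : Fin p => bad1 e)).card : ℝ) := by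
            push_cast; ring
        _ ≤ ∑ _e ∈ E1, ((2/3)^p * (N:ℝ)^p) := Finset.sum_le_sum hpi1
        _ = (E1.card : ℝ) * ((2/3)^p * (N:ℝ)^p) := by rw [Finset.sum_const]; ring
    have step3 : ((E2.biUnion (fun e => Fintype.piFinset (fun _ : Fin p => bad2 e))).card : ℝ)
        ≤ (E2.card : ℝ) * ((2/3)^p * (N:ℝ)^p) := by
      calc ((E2.biUnion _).card : ℝ)
          ≤ ((∑ e ∈ E2, (Fintype.piFinset (fun _ : Fin p => bad2 e)).card : ℕ) : ℝ) := by
            exact_mod_cast Finset.card_biUnion_le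
        _ = ∑ e ∈ E2, ((Fintype.piFinset (fun _ : Fin p => bad2 e)).card : ℝ) := by
            push_cast; ring
        _ ≤ ∑ _e ∈ E2, ((2/3)^p * (N:ℝ)^p) := Finset.sum_le_sum hpi2
        _ = (E2.card : ℝ) * ((2/3)^p * (N:ℝ)^p) := by rw [Finset.sum_const]; ring
    have hNp : (0:ℝ) < (N:ℝ)^p := by positivity
    have hBF : (BadF.card : ℝ) ≤ ((E1.card : ℝ) + E2.card) * ((2/3)^p * (N:ℝ)^p) := by
      have hc : (BadF.card : ℝ) ≤
          ((E1.biUnion (fun e => Fintype.piFinset (fun _ : Fin p => bad1 e))).card : ℝ)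
          + ((E2.biUnion (fun e => Fintype.piFinset (fun _ : Fin p => bad2 e))).card : ℝ) := by
        exact_mod_cast step1
      nlinarith [step2, step3]
    calc (BadF.card : ℝ) ≤ ((E1.card : ℝ) + E2.card) * ((2/3)^p * (N:ℝ)^p) := hBF
      _ = (((E1.card : ℝ) + E2.card) * (2/3)^p) * (N:ℝ)^p := by ring
      _ < 1 * (N:ℝ)^p := mul_lt_mul_of_pos_right hcard hNp
      _ = (N:ℝ)^p := by ring
  have hFcard : Fintype.card (Fin p → Equiv.Perm α) = N ^ p := by
    simp [Fintype.card_fun, hN]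
  have hex : ∃ F : Fin p → Equiv.Perm α, F ∉ BadF := by
    by_contra hcon
    push_neg at hcon
    have heq : BadF = Finset.univ := Finset.eq_univ_iff_forall.2 (fun F => hcon F)
    rw [heq, Finset.card_univ, hFcard] at hcardBad
    have hcast : ((N^p : ℕ) : ℝ) = (N:ℝ)^p := by push_cast; ring
    rw [hcast] at hcardBad
    exact lt_irrefl _ hcardBad
  obtain ⟨F, hF⟩ := hex
  have hnb : ¬((∃ e ∈ E1, ∀ i, ¬ G1 e (F i)) ∨ (∃ e ∈ E2, ∀ i, ¬ G2 e (F i))) := by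
    intro hc
    exact hF (by rw [hBadF]; exact Finset.mem_filter.2 ⟨Finset.mem_univ F, hc⟩)
  refine ⟨F, fun e he => ?_, fun e he => ?_⟩
  · by_contra hno
    push_neg at hno
    exact hnb (Or.inl ⟨e, he, hno⟩)
  · by_contra hno
    push_neg at hno
    exact hnb (Or.inr ⟨e, he, hno⟩)

/- cardinality bounds for the canonical event sets -/

lemma cgwlCardFilterEq {β : Type*} [Fintype β] [DecidableEq β]
    (P Q : β → Prop) [DecidablePred P] [DecidablePred Q] (f : β → β)
    (hPQ : ∀ b, P b → Q (f b)) (hQP : ∀ b, Q b → P (f b)) (hff : ∀ b, f (f b) = b) :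
    (Finset.univ.filter P).card = (Finset.univ.filter Q).card := by
  apply Finset.card_bij' (fun b _ => f b) (fun b _ => f b)
  · intro a ha
    simp only [Finset.mem_filter, Finset.mem_univ, true_and] at *
    exact hPQ a ha
  · intro a ha
    simp only [Finset.mem_filter, Finset.mem_univ, true_and] at *
    exact hQP a ha
  · intro a _; exact hff a
  · intro a _; exact hff a

lemma cgwlSumTwoFilters {β : Type*} [Fintype β] [DecidableEq β]
    (P Q : β → Prop) [DecidablePred P] [DecidablePred Q]
    (hdisj : ∀ b, P b → ¬ Q b) :
    (Finset.univ.filter P).card + (Finset.univ.filter Q).card ≤ Fintype.card β := by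
  have hd : Disjoint (Finset.univ.filter P) (Finset.univ.filter Q) := by
    rw [Finset.disjoint_left]
    intro a ha hb
    simp only [Finset.mem_filter, Finset.mem_univ, true_and] at ha hb
    exact hdisj a ha hb
  rw [← Finset.card_union_of_disjoint hd]
  simpa using Finset.card_le_univ _

lemma cgwlCardT (n : ℕ) :
    2 * (Finset.univ.filter (fun q : Fin n × Fin n => q.1 ≤ q.2)).card ≤ n^2 + n := by
  classical
  have hsplit : (Finset.univ.filter (fun q : Fin n × Fin n => q.1 ≤ q.2))
      = (Finset.univ.filter (fun q : Fin n × Fin n => q.1 < q.2))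
        ∪ (Finset.univ.filter (fun q : Fin n × Fin n => q.1 = q.2)) := by
    ext q
    simp only [Finset.mem_filter, Finset.mem_union, Finset.mem_univ, true_and]
    exact le_iff_lt_or_eq
  have heq : (Finset.univ.filter (fun q : Fin n × Fin n => q.1 < q.2)).card
      = (Finset.univ.filter (fun q : Fin n × Fin n => q.2 < q.1)).card := by
    apply cgwlCardFilterEq _ _ (fun q => (q.2, q.1))
    · intro q h; exact h
    · intro q h; exact h
    · intro q; rfl
  have hsum : (Finset.univ.filter (fun q : Fin n × Fin n => q.1 < q.2)).card
      + (Finset.univ.filter (fun q : Fin n × Fin n => q.2 < q.1)).card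
      + (Finset.univ.filter (fun q : Fin n × Fin n => q.1 = q.2)).card ≤ n^2 := by
    have h1 : ∀ q : Fin n × Fin n, (q.1 < q.2 ∨ q.2 < q.1) → ¬ q.1 = q.2 := by
      intro q h he; rw [he] at h; exact absurd h (by simp)
    have h2 := cgwlSumTwoFilters (fun q : Fin n × Fin n => q.1 < q.2 ∨ q.2 < q.1)
      (fun q : Fin n × Fin n => q.1 = q.2) h1
    have h3 : (Finset.univ.filter (fun q : Fin n × Fin n => q.1 < q.2 ∨ q.2 < q.1)).card
        = (Finset.univ.filter (fun q : Fin n × Fin n => q.1 < q.2)).card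
          + (Finset.univ.filter (fun q : Fin n × Fin n => q.2 < q.1)).card := by
      rw [Finset.filter_or]
      apply Finset.card_union_of_disjoint
      rw [Finset.disjoint_left]
      intro q hq hq'
      simp only [Finset.mem_filter, Finset.mem_univ, true_and] at hq hq'
      exact absurd hq' (not_lt.2 (le_of_lt hq))
    rw [h3] at h2
    have h4 : Fintype.card (Fin n × Fin n) = n^2 := by simp [sq]
    omega
  have hdiag : (Finset.univ.filter (fun q : Fin n × Fin n => q.1 = q.2)).card ≤ n := by
    have hd : (Finset.univ.filter (fun q : Fin n × Fin n => q.1 = q.2)).card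
        ≤ (Finset.univ : Finset (Fin n)).card := by
      apply Finset.card_le_card_of_injOn (fun q => q.1)
      · intro q _; simp
      · intro q hq q' hq' h
        simp only [Finset.coe_filter, Set.mem_setOf_eq] at hq hq'
        exact Prod.ext h (by rw [← hq.2, ← hq'.2]; exact h)
    simpa using hd
  have hcard := Finset.card_union_le
    (Finset.univ.filter (fun q : Fin n × Fin n => q.1 < q.2))
    (Finset.univ.filter (fun q : Fin n × Fin n => q.1 = q.2))
  rw [← hsplit] at hcard
  omega

lemma cgwlCardE4 (n : ℕ) :
    8 * (Finset.univ.filter (fun q : (Fin n × Fin n) × (Fin n × Fin n) =>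
      q.1.1 ≤ q.1.2 ∧ q.2.1 ≤ q.2.2 ∧ q.1.1 < q.2.1 ∧
      q.1.1 ≠ q.2.2 ∧ q.1.2 ≠ q.2.1 ∧ q.1.2 ≠ q.2.2)).card ≤ (n^2 + n)^2 := by
  classical
  have hEA : (Finset.univ.filter (fun q : (Fin n × Fin n) × (Fin n × Fin n) =>
      q.1.1 ≤ q.1.2 ∧ q.2.1 ≤ q.2.2 ∧ q.1.1 < q.2.1 ∧
      q.1.1 ≠ q.2.2 ∧ q.1.2 ≠ q.2.1 ∧ q.1.2 ≠ q.2.2)) ⊆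
      (Finset.univ.filter (fun q : (Fin n × Fin n) × (Fin n × Fin n) =>
      q.1.1 ≤ q.1.2 ∧ q.2.1 ≤ q.2.2 ∧ q.1.1 < q.2.1)) := by
    intro q hq
    simp only [Finset.mem_filter, Finset.mem_univ, true_and] at hq ⊢
    exact ⟨hq.1, hq.2.1, hq.2.2.1⟩
  have heq : (Finset.univ.filter (fun q : (Fin n × Fin n) × (Fin n × Fin n) =>
        q.1.1 ≤ q.1.2 ∧ q.2.1 ≤ q.2.2 ∧ q.1.1 < q.2.1)).card
      = (Finset.univ.filter (fun q : (Fin n × Fin n) × (Fin n × Fin n) =>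
        q.1.1 ≤ q.1.2 ∧ q.2.1 ≤ q.2.2 ∧ q.2.1 < q.1.1)).card := by
    apply cgwlCardFilterEq _ _ (fun q => (q.2, q.1))
    · intro q h; exact ⟨h.2.1, h.1, h.2.2⟩
    · intro q h; exact ⟨h.2.1, h.1, h.2.2⟩
    · intro q; rfl
  have hsub : (Finset.univ.filter (fun q : (Fin n × Fin n) × (Fin n × Fin n) =>
          q.1.1 ≤ q.1.2 ∧ q.2.1 ≤ q.2.2 ∧ q.1.1 < q.2.1))
        ∪ (Finset.univ.filter (fun q : (Fin n × Fin n) × (Fin n × Fin n) =>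
          q.1.1 ≤ q.1.2 ∧ q.2.1 ≤ q.2.2 ∧ q.2.1 < q.1.1))
      ⊆ (Finset.univ.filter (fun q : Fin n × Fin n => q.1 ≤ q.2)) ×ˢ
        (Finset.univ.filter (fun q : Fin n × Fin n => q.1 ≤ q.2)) := by
    intro q hq
    rw [Finset.mem_product]
    rcases Finset.mem_union.1 hq with h | h <;>
    · simp only [Finset.mem_filter, Finset.mem_univ, true_and] at h ⊢
      exact ⟨h.1, h.2.1⟩
  have hdisj' : Disjoint (Finset.univ.filter (fun q : (Fin n × Fin n) × (Fin n × Fin n) =>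
          q.1.1 ≤ q.1.2 ∧ q.2.1 ≤ q.2.2 ∧ q.1.1 < q.2.1))
        (Finset.univ.filter (fun q : (Fin n × Fin n) × (Fin n × Fin n) =>
          q.1.1 ≤ q.1.2 ∧ q.2.1 ≤ q.2.2 ∧ q.2.1 < q.1.1)) := by
    rw [Finset.disjoint_left]
    intro q hq hq'
    simp only [Finset.mem_filter, Finset.mem_univ, true_and] at hq hq'
    exact absurd hq'.2.2 (not_lt.2 (le_of_lt hq.2.2))
  have h2A := Finset.card_le_card hsub
  rw [Finset.card_union_of_disjoint hdisj', Finset.card_product] at h2A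
  have hTc := cgwlCardT n
  have hE4A := Finset.card_le_card hEA
  nlinarith [hE4A, heq, h2A, hTc]

lemma cgwlCardE3 (n : ℕ) :
    2 * (Finset.univ.filter (fun t : Fin n × Fin n × Fin n =>
      t.2.1 < t.2.2 ∧ t.2.1 ≠ t.1 ∧ t.2.2 ≠ t.1)).card ≤ n^3 := by
  classical
  have hEA : (Finset.univ.filter (fun t : Fin n × Fin n × Fin n =>
      t.2.1 < t.2.2 ∧ t.2.1 ≠ t.1 ∧ t.2.2 ≠ t.1)) ⊆
      (Finset.univ.filter (fun t : Fin n × Fin n × Fin n => t.2.1 < t.2.2)) := by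
    intro t ht
    simp only [Finset.mem_filter, Finset.mem_univ, true_and] at ht ⊢
    exact ht.1
  have heq : (Finset.univ.filter (fun t : Fin n × Fin n × Fin n => t.2.1 < t.2.2)).card
      = (Finset.univ.filter (fun t : Fin n × Fin n × Fin n => t.2.2 < t.2.1)).card := by
    apply cgwlCardFilterEq _ _ (fun t => (t.1, t.2.2, t.2.1))
    · intro t h; exact h
    · intro t h; exact h
    · intro t; rfl
  have hsum := cgwlSumTwoFilters (fun t : Fin n × Fin n × Fin n => t.2.1 < t.2.2)
    (fun t : Fin n × Fin n × Fin n => t.2.2 < t.2.1)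
    (fun t h hc => absurd hc (not_lt.2 (le_of_lt h)))
  have hc : Fintype.card (Fin n × Fin n × Fin n) = n^3 := by
    simp [pow_succ, pow_zero]; ring
  have hE := Finset.card_le_card hEA
  omega

/- analytic estimates -/

lemma cgwlLog32 : (2:ℝ)/5 ≤ Real.log (3/2) := by
  rw [Real.le_log_iff_exp_le (by norm_num)]
  have h5 : Real.exp (2/5) ^ (5:ℕ) = Real.exp 2 := by
    rw [← Real.exp_nat_mul]; norm_num
  have he2 : Real.exp 2 < 7.3890561 := by
    have h1 := Real.exp_one_lt_d9
    have h2 : Real.exp 2 = Real.exp 1 ^ (2:ℕ) := by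
      rw [← Real.exp_nat_mul]; norm_num
    rw [h2]
    nlinarith [Real.exp_pos 1]
  by_contra hcon
  push_neg at hcon
  have h32 : ((3:ℝ)/2) ^ (5:ℕ) < Real.exp (2/5) ^ (5:ℕ) := by
    apply pow_lt_pow_left₀ hcon (by norm_num)
    norm_num
  rw [h5] at h32
  norm_num at h32
  linarith

lemma cgwlLog2 : (1:ℝ)/10 ≤ Real.log 2 := by
  rw [Real.le_log_iff_exp_le (by norm_num)]
  have h10 : Real.exp (1/10) ^ (10:ℕ) = Real.exp 1 := by
    rw [← Real.exp_nat_mul]; norm_num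
  by_contra hcon
  push_neg at hcon
  have h2 : (2:ℝ) ^ (10:ℕ) < Real.exp (1/10) ^ (10:ℕ) := by
    apply pow_lt_pow_left₀ hcon (by norm_num)
    norm_num
  rw [h10] at h2
  have := Real.exp_one_lt_d9
  norm_num at h2
  linarith

lemma cgwlKeyIneq (n : ℕ) (hn : 2 ≤ n) (E4c E3c : ℕ)
    (h4 : 8 * E4c ≤ (n^2+n)^2) (h3 : 2 * E3c ≤ n^3) :
    ((E4c : ℝ) + (E3c : ℝ)) * (2/3) ^ (⌊(10 : ℝ) * Real.log n⌋₊) < 1 := by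
  have hn2 : (2:ℝ) ≤ (n:ℝ) := by exact_mod_cast hn
  have hn0 : (0:ℝ) < (n:ℝ) := by linarith
  have hlogn : 0 ≤ Real.log n := Real.log_nonneg (by linarith)
  set p : ℕ := ⌊(10 : ℝ) * Real.log n⌋₊ with hp
  have hxp : (10 : ℝ) * Real.log n ≤ (p:ℝ) + 1 :=
    le_of_lt (Nat.lt_floor_add_one _)
  have key : ((n:ℝ))^(4:ℕ) ≤ (3/2) * (3/2)^p := by
    have e1 : ((n:ℝ))^(4:ℕ) = Real.exp (Real.log n * 4) := by
      rw [← Real.rpow_natCast (n:ℝ) 4, Real.rpow_def_of_pos hn0]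
      norm_num
    have e2 : ((3:ℝ)/2)^p = Real.exp (Real.log (3/2) * p) := by
      rw [← Real.rpow_natCast ((3:ℝ)/2) p, Real.rpow_def_of_pos (by norm_num)]
    have e3 : ((3:ℝ)/2) = Real.exp (Real.log (3/2)) := by
      rw [Real.exp_log (by norm_num)]
    rw [e1, e2]
    nth_rewrite 1 [e3]
    rw [← Real.exp_add]
    apply Real.exp_le_exp.2
    have hL := cgwlLog32
    nlinarith [(Nat.cast_nonneg p : (0:ℝ) ≤ (p:ℝ))]
  have hcounts : (E4c : ℝ) + (E3c : ℝ) < (2/3) * ((n:ℝ))^(4:ℕ) := by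
    have c4 : (8:ℝ) * E4c ≤ ((n:ℝ)^2 + n)^2 := by exact_mod_cast h4
    have c3 : (2:ℝ) * E3c ≤ (n:ℝ)^3 := by exact_mod_cast h3
    nlinarith [hn2, sq_nonneg ((n:ℝ) - 2)]
  have hpow : (0:ℝ) < (2/3)^p := by positivity
  calc ((E4c : ℝ) + (E3c : ℝ)) * (2/3) ^ p
      < ((2/3) * ((n:ℝ))^(4:ℕ)) * (2/3)^p := mul_lt_mul_of_pos_right hcounts hpow
    _ ≤ ((2/3) * ((3/2) * (3/2)^p)) * (2/3)^p := by
        have h23 : (0:ℝ) < 2/3 := by norm_num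
        have := mul_le_mul_of_nonneg_left key (le_of_lt h23)
        nlinarith [hpow]
    _ = (3/2)^p * (2/3)^p := by ring
    _ = 1 := by rw [← mul_pow]; norm_num

/- symmetry lemmas for Separates -/

lemma cgwlSepSymmUW {V : Type*} {f : V → ℕ} {u w x y : V}
    (h : Separates f u w x y) : Separates f w u x y := by
  unfold Separates at *; tauto

lemma cgwlSepSymmXY {V : Type*} {f : V → ℕ} {u w x y : V}
    (h : Separates f u w x y) : Separates f u w y x := by
  unfold Separates at *; tauto

lemma cgwlSepSwap {V : Type*} {f : V → ℕ} {u w x y : V}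
    (h : Separates f u w x y) : Separates f x y u w := by
  unfold Separates at *; tauto

end Aux

/-- Let `n ≥ 2` and let `G` be the complete graph on `n` vertices with a loop at every
vertex. Then there exist `p ≤ 10 log n` linear orderings of the vertex set such that
(1) every pair of edges with no common endpoint are separated in some ordering, and
(2) for all distinct vertices `u, v, w`, some ordering places `v` strictly between
`u` and `w`. -/
theorem complete_graph_with_loops_orderings (n : ℕ) (hn : 2 ≤ n) :
    ∃ p : ℕ, 1 ≤ p ∧ (p : ℝ) ≤ 10 * Real.log n ∧
      ∃ f : Fin p → Fin n → ℕ, (∀ i, Function.Injective (f i)) ∧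
        (∀ u w x y : Fin n, u ≠ x → u ≠ y → w ≠ x → w ≠ y →
          ∃ i, Separates (f i) u w x y) ∧
        (∀ v u w : Fin n, u ≠ v → w ≠ v → u ≠ w →
          ∃ i, (f i u < f i v ∧ f i v < f i w) ∨ (f i w < f i v ∧ f i v < f i u)) := by
  classical
  have hn2 : (2:ℝ) ≤ (n:ℝ) := by exact_mod_cast hn
  have hlogn : 0 ≤ Real.log n := Real.log_nonneg (by linarith)
  set p : ℕ := ⌊(10 : ℝ) * Real.log n⌋₊ with hp
  have hp1 : 1 ≤ p := by
    rw [hp]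
    apply Nat.le_floor
    have hl2 : Real.log 2 ≤ Real.log n :=
      Real.log_le_log (by norm_num) (by exact_mod_cast hn)
    have := cgwlLog2
    push_cast
    linarith
  have hp2 : (p : ℝ) ≤ 10 * Real.log n := Nat.floor_le (by positivity)
  -- canonical event sets
  set E4 : Finset ((Fin n × Fin n) × (Fin n × Fin n)) :=
    Finset.univ.filter (fun q => q.1.1 ≤ q.1.2 ∧ q.2.1 ≤ q.2.2 ∧ q.1.1 < q.2.1 ∧
      q.1.1 ≠ q.2.2 ∧ q.1.2 ≠ q.2.1 ∧ q.1.2 ≠ q.2.2) with hE4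
  set E3 : Finset (Fin n × Fin n × Fin n) :=
    Finset.univ.filter (fun t => t.2.1 < t.2.2 ∧ t.2.1 ≠ t.1 ∧ t.2.2 ≠ t.1) with hE3
  obtain ⟨F, hF1, hF2⟩ := cgwlExistsGoodTuple (α := Fin n) E4 E3
    (fun e σ => Separates (fun v => ((σ v : Fin n) : ℕ)) e.1.1 e.1.2 e.2.1 e.2.2)
    (fun e σ => ((((σ e.2.1 : Fin n) : ℕ) < ((σ e.1 : Fin n) : ℕ) ∧
        ((σ e.1 : Fin n) : ℕ) < ((σ e.2.2 : Fin n) : ℕ)) ∨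
       (((σ e.2.2 : Fin n) : ℕ) < ((σ e.1 : Fin n) : ℕ) ∧
        ((σ e.1 : Fin n) : ℕ) < ((σ e.2.1 : Fin n) : ℕ))))
    p
    (by
      intro e he
      rw [hE4, Finset.mem_filter] at he
      obtain ⟨-, h1, h2, h3, h4, h5, h6⟩ := he
      exact cgwlGood3Sep e.1.1 e.1.2 e.2.1 e.2.2 (ne_of_lt h3) h4 h5 h6)
    (by
      intro e he
      rw [hE3, Finset.mem_filter] at he
      obtain ⟨-, h1, h2, h3⟩ := he
      exact cgwlGood3Mid e.1 e.2.1 e.2.2 h2 h3 (ne_of_lt h1))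
    (cgwlKeyIneq n hn E4.card E3.card (cgwlCardE4 n) (cgwlCardE3 n))
  refine ⟨p, hp1, hp2, fun i v => ((F i v : Fin n) : ℕ), ?_, ?_, ?_⟩
  · intro i
    exact Fin.val_injective.comp (F i).injective
  · -- separation of disjoint edges
    intro u w x y hux huy hwx hwy
    have key : ∀ a b c d : Fin n, a ≤ b → c ≤ d → a ≠ c → a ≠ d → b ≠ c → b ≠ d →
        ∃ i, Separates (fun v => ((F i v : Fin n) : ℕ)) a b c d := by
      intro a b c d hab hcd k1 k2 k3 k4
      rcases lt_or_gt_of_ne k1 with h | h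
      · exact hF1 ((a,b),(c,d)) (by
          rw [hE4, Finset.mem_filter]
          exact ⟨Finset.mem_univ _, hab, hcd, h, k2, k3, k4⟩)
      · obtain ⟨i, hi⟩ := hF1 ((c,d),(a,b)) (by
          rw [hE4, Finset.mem_filter]
          exact ⟨Finset.mem_univ _, hcd, hab, h, Ne.symm k3, Ne.symm k2, Ne.symm k4⟩)
        exact ⟨i, cgwlSepSwap hi⟩
    rcases le_total u w with h1 | h1 <;> rcases le_total x y with h2 | h2
    · exact key u w x y h1 h2 hux huy hwx hwy
    · obtain ⟨i, hi⟩ := key u w y x h1 h2 huy hux hwy hwx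
      exact ⟨i, cgwlSepSymmXY hi⟩
    · obtain ⟨i, hi⟩ := key w u x y h1 h2 hwx hwy hux huy
      exact ⟨i, cgwlSepSymmUW hi⟩
    · obtain ⟨i, hi⟩ := key w u y x h1 h2 hwy hwx huy hux
      exact ⟨i, cgwlSepSymmUW (cgwlSepSymmXY hi)⟩
  · -- betweenness
    intro v u w huv hwv huw
    rcases lt_or_gt_of_ne huw with h | h
    · exact hF2 (v, u, w) (by
        rw [hE3, Finset.mem_filter]
        exact ⟨Finset.mem_univ _, h, huv, hwv⟩)
    · obtain ⟨i, hi⟩ := hF2 (v, w, u) (by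
        rw [hE3, Finset.mem_filter]
        exact ⟨Finset.mem_univ _, h, hwv, huv⟩)
      exact ⟨i, Or.symm hi⟩
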